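/- In the code-generation model with a coalition C of size c ≥ 2 using any admissible strategy, for every α > 0: E[exp(−α·S)] ≤ (E_{0,0} + E_{1,c} + Σ_{x=1}^{c−1} C(c,x)·max(E_{0,x}, E_{1,x}))^m, where for integers 0 ≤ x ≤ c one defines E_{0,x} = ∫_t^{1−t} f(p)·p^x·(1−p)^{c−x} dp and E_{1,x} = ∫_t^{1−t} f(p)·p^x·(1−p)^{c−x}·exp(α·g1(p)·(cp−x)/(1−p)) dp. -/

import Mathlib

open MeasureTheory ProbabilityTheory Real
open scoped ENNReal NNReal

noncomputable section

/-- Bernoulli measure on `Bool` with parameter `p`. -/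
def bern (p : ℝ) : Measure Bool :=
  ENNReal.ofReal p • Measure.dirac true + ENNReal.ofReal (1 - p) • Measure.dirac false

/-- The measure on `ℝ` with density `f` (w.r.t. Lebesgue measure). -/
def biasMeasure (f : ℝ → ℝ) : Measure ℝ :=
  MeasureTheory.volume.withDensity fun p => ENNReal.ofReal (f p)

/-- Joint law of the biases `p = (p_1,…,p_m)` (i.i.d. with density `f`) together with the
code matrix `X` whose entries `X j i` are, conditionally on `p`, independent
Bernoulli(`p i`). -/
def codeMeasure (n m : ℕ) (f : ℝ → ℝ) :
    Measure ((Fin m → ℝ) × (Fin n → Fin m → Bool)) :=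
  (Measure.pi fun _ : Fin m => biasMeasure f).bind fun p =>
    (Measure.dirac p).prod (Measure.pi fun _ : Fin n => Measure.pi fun i : Fin m => bern (p i))

/-- The accusation sum `S_j = Σ_i y_i · (g1 (p_i) if X_{ji} = 1, g0 (p_i) if X_{ji} = 0)`. -/
def accusation (m : ℕ) (g1 g0 : ℝ → ℝ) (p : Fin m → ℝ) (x : Fin m → Bool)
    (y : Fin m → Bool) : ℝ :=
  ∑ i, if y i then (if x i then g1 (p i) else g0 (p i)) else 0

/-- `E_{0,x} = ∫_t^{1-t} f p · p^x · (1-p)^{c-x} dp`. -/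
def E₀ (t : ℝ) (f : ℝ → ℝ) (c x : ℕ) : ℝ :=
  ∫ p in Set.Icc t (1-t), f p * p ^ x * (1-p) ^ (c - x)

/-- `E_{1,x} = ∫_t^{1-t} f p · p^x · (1-p)^{c-x} · exp (α·g1 p·(cp - x)/(1-p)) dp`. -/
def E₁ (t : ℝ) (f g1 : ℝ → ℝ) (α : ℝ) (c x : ℕ) : ℝ :=
  ∫ p in Set.Icc t (1-t),
    f p * p ^ x * (1-p) ^ (c - x) * Real.exp (α * g1 p * ((c:ℝ) * p - (x:ℝ)) / (1-p))

/-! ### Auxiliary definitions and lemmas -/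

def θ (p : ℝ) (b : Bool) : ℝ≥0∞ := bif b then ENNReal.ofReal p else ENNReal.ofReal (1-p)

lemma theta_measurable (b : Bool) : Measurable fun p => θ p b := by
  cases b
  · exact ENNReal.measurable_ofReal.comp (measurable_const.sub measurable_id)
  · exact ENNReal.measurable_ofReal.comp measurable_id

instance bern_finite (p : ℝ) : IsFiniteMeasure (bern p) := by
  constructor
  simp [bern]

lemma theta_sum (p : ℝ) (hp : p ∈ Set.Icc (0:ℝ) 1) : θ p true + θ p false = 1 := by
  simp only [θ, cond_true, cond_false]
  rw [← ENNReal.ofReal_add hp.1 (by linarith [hp.2])]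
  norm_num

lemma bern_singleton (p : ℝ) (b : Bool) : bern p {b} = θ p b := by
  cases b <;> simp [bern, θ, Measure.dirac_apply]

lemma matrixM_singleton {n m : ℕ} (p : Fin m → ℝ) (X : Fin n → Fin m → Bool) :
    (Measure.pi fun _ : Fin n => Measure.pi fun i => bern (p i)) {X}
      = ∏ j, ∏ i, θ (p i) (X j i) := by
  rw [← Set.univ_pi_singleton X, Measure.pi_pi]
  refine Finset.prod_congr rfl fun j _ => ?_
  rw [← Set.univ_pi_singleton (X j), Measure.pi_pi]
  exact Finset.prod_congr rfl fun i _ => bern_singleton _ _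

lemma measurable_kernel {n m : ℕ} :
    Measurable fun p : Fin m → ℝ =>
      (Measure.dirac p).prod (Measure.pi fun _ : Fin n => Measure.pi fun i => bern (p i)) := by
  apply Measure.measurable_of_measurable_coe
  intro s hs
  simp_rw [Measure.dirac_prod, Measure.map_apply measurable_prodMk_left hs]
  have : ∀ p : Fin m → ℝ,
      (Measure.pi fun _ : Fin n => Measure.pi fun i => bern (p i)) (Prod.mk p ⁻¹' s)
      = ∑ X : Fin n → Fin m → Bool,
          Set.indicator s (fun _ => (1:ℝ≥0∞)) (p, X) * ∏ j, ∏ i, θ (p i) (X j i) := by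
    intro p
    rw [← lintegral_indicator_one (measurable_prodMk_left hs), lintegral_fintype]
    refine Finset.sum_congr rfl fun X _ => ?_
    rw [matrixM_singleton]
    rfl
  simp_rw [this]
  refine Finset.measurable_sum _ fun X _ => Measurable.mul ?_ ?_
  · exact ((measurable_const.indicator hs).comp (measurable_id.prodMk measurable_const))
  · exact Finset.measurable_prod _ fun j _ => Finset.measurable_prod _ fun i _ =>
      (theta_measurable (X j i)).comp (measurable_pi_apply i)

lemma lintegral_codeMeasure {n m : ℕ} (f : ℝ → ℝ)
    (F : (Fin m → ℝ) × (Fin n → Fin m → Bool) → ℝ≥0∞) (hF : Measurable F) :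
    ∫⁻ q, F q ∂(codeMeasure n m f)
      = ∫⁻ p, ∑ X : Fin n → Fin m → Bool, (∏ j, ∏ i, θ (p i) (X j i)) * F (p, X)
          ∂(Measure.pi fun _ : Fin m => biasMeasure f) := by
  rw [codeMeasure, Measure.lintegral_bind measurable_kernel.aemeasurable hF.aemeasurable]
  refine lintegral_congr fun p => ?_
  rw [Measure.dirac_prod, lintegral_map hF measurable_prodMk_left, lintegral_fintype]
  refine Finset.sum_congr rfl fun X _ => ?_
  rw [matrixM_singleton, mul_comm]

lemma lintegral_pi_prod {α : Type*} [MeasurableSpace α] (ν : Measure α) [SigmaFinite ν] :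
    ∀ {k : ℕ} (Φ : Fin k → α → ℝ≥0∞), (∀ i, Measurable (Φ i)) →
    ∫⁻ p, ∏ i, Φ i (p i) ∂(Measure.pi fun _ : Fin k => ν) = ∏ i, ∫⁻ x, Φ i x ∂ν := by
  intro k
  induction k with
  | zero => intro Φ _; simp
  | succ k ih =>
    intro Φ hΦ
    have hmp := (measurePreserving_piFinSuccAbove (fun _ : Fin (k+1) => ν) 0).symm
    rw [← hmp.lintegral_comp (by
      exact Finset.measurable_prod _ fun i _ => (hΦ i).comp (measurable_pi_apply i))]
    simp only [MeasurableEquiv.piFinSuccAbove_symm_apply, Fin.insertNthEquiv, Equiv.coe_fn_mk,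
      Fin.prod_univ_succ, Fin.insertNth_zero, Fin.cons_zero, Fin.cons_succ, Fin.zero_succAbove,
      cast_eq]
    rw [lintegral_prod_mul (f := Φ 0) (g := fun w : Fin k → α => ∏ x : Fin k, Φ x.succ (w x))
      ((hΦ 0).aemeasurable) (Finset.aemeasurable_fun_prod _ fun (i : Fin k) _ =>
        ((hΦ i.succ).comp (measurable_pi_apply i)).aemeasurable)]
    rw [ih (fun i => Φ i.succ) (fun i => hΦ i.succ)]

lemma ae_mem_bias (t : ℝ) (f : ℝ → ℝ)
    (hf_supp : ∀ p, p ∉ Set.Icc t (1-t) → f p = 0) :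
    ∀ᵐ q ∂(biasMeasure f), q ∈ Set.Icc t (1-t) := by
  rw [ae_iff]
  have : {q : ℝ | ¬ q ∈ Set.Icc t (1-t)} = (Set.Icc t (1-t))ᶜ := rfl
  rw [this, biasMeasure, withDensity_apply _ measurableSet_Icc.compl]
  rw [setLIntegral_congr_fun measurableSet_Icc.compl
    ((fun q hq => by simp [hf_supp q hq] : ∀ q ∈ (Set.Icc t (1-t))ᶜ,
      ENNReal.ofReal (f q) = (0:ℝ≥0∞)))]
  simp

lemma bias_lintegral (t : ℝ) (f : ℝ → ℝ) (hf_meas : Measurable f)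
    (hf_nonneg : ∀ p, 0 ≤ f p) (hf_supp : ∀ p, p ∉ Set.Icc t (1-t) → f p = 0)
    (hf_int : Integrable f) (G : ℝ → ℝ) (hG : Measurable G)
    (hGnn : ∀ q ∈ Set.Icc t (1-t), 0 ≤ G q)
    (M : ℝ) (hM : ∀ q ∈ Set.Icc t (1-t), G q ≤ M) :
    ∫⁻ q, ENNReal.ofReal (G q) ∂(biasMeasure f)
      = ENNReal.ofReal (∫ q in Set.Icc t (1-t), f q * G q) := by
  have h1 : ∫⁻ q, ENNReal.ofReal (G q) ∂(biasMeasure f)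
      = ∫⁻ q, ENNReal.ofReal (f q) * ENNReal.ofReal (G q) := by
    rw [biasMeasure, lintegral_withDensity_eq_lintegral_mul _ hf_meas.ennreal_ofReal
      hG.ennreal_ofReal]; rfl
  have h2 : ∀ q, ENNReal.ofReal (f q) * ENNReal.ofReal (G q) = ENNReal.ofReal (f q * G q) :=
    fun q => (ENNReal.ofReal_mul (hf_nonneg q)).symm
  have hfi : Integrable (fun q => f q * G q) := by
    refine Integrable.mono (hf_int.const_mul (max M 0)) ((hf_meas.mul hG).aestronglyMeasurable)
      (ae_of_all _ fun q => ?_)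
    rw [Real.norm_eq_abs, Real.norm_eq_abs,
      abs_of_nonneg (mul_nonneg (le_max_right M 0) (hf_nonneg q))]
    by_cases hq : q ∈ Set.Icc t (1-t)
    · rw [abs_of_nonneg (mul_nonneg (hf_nonneg q) (hGnn q hq))]
      exact mul_le_mul_of_nonneg_left ((hM q hq).trans (le_max_left M 0)) (hf_nonneg q)
        |>.trans_eq (mul_comm _ _)
    · simp [hf_supp q hq, mul_nonneg (le_max_right M 0) (hf_nonneg q)]
  simp_rw [h1, h2]
  rw [← ofReal_integral_eq_lintegral_ofReal hfi
    (ae_of_all _ fun q => by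
      by_cases hq : q ∈ Set.Icc t (1-t)
      · exact mul_nonneg (hf_nonneg q) (hGnn q hq)
      · simp [hf_supp q hq])]
  congr 1
  rw [← integral_indicator measurableSet_Icc]
  refine integral_congr_ae (ae_of_all _ fun q => ?_)
  by_cases hq : q ∈ Set.Icc t (1-t)
  · simp [Set.indicator_of_mem hq]
  · simp [Set.indicator_of_notMem hq, hf_supp q hq]

lemma sum_columns {κ : Type*} [Fintype κ] [DecidableEq κ] {m : ℕ}
    (F : Fin m → (κ → Bool) → ℝ≥0∞) :
    ∑ W : κ → Fin m → Bool, ∏ i, F i (fun j => W j i) = ∏ i, ∑ v : κ → Bool, F i v := by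
  rw [Finset.prod_univ_sum]
  rw [Fintype.piFinset_univ]
  exact (Fintype.sum_equiv (Equiv.piComm fun _ _ => Bool) _ _ fun W => rfl).symm

lemma sum_rows_one {κ : Type*} [Fintype κ] [DecidableEq κ] {m : ℕ} (p : Fin m → ℝ)
    (hp : ∀ i, p i ∈ Set.Icc (0:ℝ) 1) :
    ∑ W : κ → Fin m → Bool, ∏ j : κ, ∏ i, θ (p i) (W j i) = 1 := by
  have hrow : ∑ row : Fin m → Bool, ∏ i, θ (p i) (row i) = 1 := by
    have h := Finset.prod_univ_sum (fun _ : Fin m => (Finset.univ : Finset Bool))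
      (fun i b => θ (p i) b)
    rw [Fintype.piFinset_univ] at h
    rw [← h]
    refine (Finset.prod_congr rfl fun i _ => ?_).trans Finset.prod_const_one
    rw [Fintype.sum_bool]
    exact theta_sum (p i) (hp i)
  have h2 := Finset.prod_univ_sum (fun _ : κ => (Finset.univ : Finset (Fin m → Bool)))
    (fun j row => ∏ i, θ (p i) (row i))
  rw [Fintype.piFinset_univ] at h2
  rw [← h2]
  simp [hrow]

lemma sum_group {n m : ℕ} (C : Finset (Fin n)) (p : Fin m → ℝ)
    (hp : ∀ i, p i ∈ Set.Icc (0:ℝ) 1)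
    (G : (Fin n → Fin m → Bool) → ℝ≥0∞)
    (G' : ({x // x ∈ C} → Fin m → Bool) → ℝ≥0∞)
    (hG : ∀ X, G X = G' (fun j => X j.1)) :
    ∑ X : Fin n → Fin m → Bool, (∏ j, ∏ i, θ (p i) (X j i)) * G X
      = ∑ W : {x // x ∈ C} → Fin m → Bool, (∏ j, ∏ i, θ (p i) (W j i)) * G' W := by
  classical
  rw [← Fintype.sum_equiv ((Equiv.piEquivPiSubtypeProd (fun x : Fin n => x ∈ C)
      (fun _ => Fin m → Bool)).symm)
      (fun Y => (∏ j, ∏ i, θ (p i) ((Equiv.piEquivPiSubtypeProd (fun x : Fin n => x ∈ C)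
        (fun _ => Fin m → Bool)).symm Y j i)) *
        G ((Equiv.piEquivPiSubtypeProd (fun x : Fin n => x ∈ C)
        (fun _ => Fin m → Bool)).symm Y))
      (fun X => (∏ j, ∏ i, θ (p i) (X j i)) * G X) (fun Y => rfl)]
  rw [Fintype.sum_prod_type]
  refine Finset.sum_congr rfl fun W _ => ?_
  have key : ∀ rest : {x : Fin n // ¬ x ∈ C} → Fin m → Bool,
      (∏ j, ∏ i, θ (p i) ((Equiv.piEquivPiSubtypeProd (fun x : Fin n => x ∈ C)
        (fun _ => Fin m → Bool)).symm (W, rest) j i))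
      = (∏ j : {x // x ∈ C}, ∏ i, θ (p i) (W j i)) *
        (∏ j : {x : Fin n // ¬ x ∈ C}, ∏ i, θ (p i) (rest j i)) := by
    intro rest
    rw [← Fintype.prod_subtype_mul_prod_subtype (fun x : Fin n => x ∈ C)
      (fun j => ∏ i, θ (p i) ((Equiv.piEquivPiSubtypeProd (fun x : Fin n => x ∈ C)
        (fun _ => Fin m → Bool)).symm (W, rest) j i))]
    congr 1
    · refine Finset.prod_congr (by congr!) fun j _ => Finset.prod_congr rfl fun i _ => ?_
      rw [Equiv.piEquivPiSubtypeProd_symm_apply, dif_pos j.2]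
    · refine Finset.prod_congr rfl fun j _ => Finset.prod_congr rfl fun i _ => ?_
      rw [Equiv.piEquivPiSubtypeProd_symm_apply, dif_neg j.2]
  have hGW : ∀ rest : {x : Fin n // ¬ x ∈ C} → Fin m → Bool,
      G ((Equiv.piEquivPiSubtypeProd (fun x : Fin n => x ∈ C)
        (fun _ => Fin m → Bool)).symm (W, rest)) = G' W := by
    intro rest
    rw [hG]
    congr 1
    funext j
    rw [Equiv.piEquivPiSubtypeProd_symm_apply, dif_pos j.2]
  calc ∑ rest : {x : Fin n // ¬ x ∈ C} → Fin m → Bool,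
        (∏ j, ∏ i, θ (p i) ((Equiv.piEquivPiSubtypeProd (fun x : Fin n => x ∈ C)
          (fun _ => Fin m → Bool)).symm (W, rest) j i)) *
          G ((Equiv.piEquivPiSubtypeProd (fun x : Fin n => x ∈ C)
            (fun _ => Fin m → Bool)).symm (W, rest))
      = ∑ rest : {x : Fin n // ¬ x ∈ C} → Fin m → Bool,
          ((∏ j : {x // x ∈ C}, ∏ i, θ (p i) (W j i)) * G' W) *
            (∏ j : {x : Fin n // ¬ x ∈ C}, ∏ i, θ (p i) (rest j i)) := by
        refine Finset.sum_congr rfl fun rest _ => ?_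
        rw [key rest, hGW rest]; ring
    _ = (∏ j : {x // x ∈ C}, ∏ i, θ (p i) (W j i)) * G' W := by
        rw [← Finset.mul_sum, sum_rows_one p hp, mul_one]

def cnt {κ : Type*} [Fintype κ] (v : κ → Bool) : ℕ :=
  (Finset.univ.filter fun j => v j = true).card

lemma cnt_le {κ : Type*} [Fintype κ] (v : κ → Bool) : cnt v ≤ Fintype.card κ := by
  classical
  exact (Finset.card_filter_le _ _).trans (le_of_eq Finset.card_univ)

lemma card_not_cnt {κ : Type*} [Fintype κ] (v : κ → Bool) :
    (Finset.univ.filter fun j => ¬ v j = true).card = Fintype.card κ - cnt v := by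
  classical
  have h := Finset.card_filter_add_card_filter_not (s := (Finset.univ : Finset κ))
    (p := fun j => v j = true)
  rw [Finset.card_univ] at h
  simp only [Bool.not_eq_true] at h ⊢
  unfold cnt
  omega

lemma prod_theta_count {κ : Type*} [Fintype κ] (q : ℝ) (v : κ → Bool) :
    ∏ j, θ q (v j)
      = (ENNReal.ofReal q) ^ cnt v * (ENNReal.ofReal (1-q)) ^ (Fintype.card κ - cnt v) := by
  classical
  rw [← Finset.prod_filter_mul_prod_filter_not Finset.univ (fun j => v j = true)]
  congr 1
  · rw [Finset.prod_congr rfl (fun j hj => by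
      rw [(Finset.mem_filter.1 hj).2]; rfl : ∀ j ∈ Finset.univ.filter fun j => v j = true,
        θ q (v j) = ENNReal.ofReal q), Finset.prod_const]
    rfl
  · rw [Finset.prod_congr rfl (fun j hj => by
      have h := (Finset.mem_filter.1 hj).2
      rw [Bool.not_eq_true] at h
      rw [h]; rfl :
        ∀ j ∈ Finset.univ.filter fun j => ¬ v j = true, θ q (v j) = ENNReal.ofReal (1-q)),
      Finset.prod_const, card_not_cnt]

lemma sum_bool_count {κ : Type*} [Fintype κ] (v : κ → Bool) (a b : ℝ) :
    ∑ j, (if v j = true then a else b)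
      = (cnt v : ℝ) * a + ((Fintype.card κ - cnt v : ℕ) : ℝ) * b := by
  classical
  rw [← Finset.sum_filter_add_sum_filter_not Finset.univ (fun j => v j = true)]
  congr 1
  · rw [Finset.sum_congr rfl (fun j hj => if_pos (Finset.mem_filter.1 hj).2),
      Finset.sum_const, nsmul_eq_mul]
    rfl
  · rw [Finset.sum_congr rfl (fun j hj => if_neg (Finset.mem_filter.1 hj).2),
      Finset.sum_const, nsmul_eq_mul, card_not_cnt]

lemma cnt_eq_zero {κ : Type*} [Fintype κ] {v : κ → Bool} :
    cnt v = 0 ↔ ∀ j, v j = false := by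
  classical
  unfold cnt
  rw [Finset.card_eq_zero, Finset.filter_eq_empty_iff]
  simp

lemma cnt_eq_card {κ : Type*} [Fintype κ] {v : κ → Bool} :
    cnt v = Fintype.card κ ↔ ∀ j, v j = true := by
  classical
  unfold cnt
  rw [← Finset.card_univ, Finset.card_filter_eq_iff]
  simp

lemma sum_count {κ : Type*} [Fintype κ] [DecidableEq κ] (F : ℕ → ℝ≥0∞) :
    ∑ v : κ → Bool, F (cnt v)
      = ∑ x ∈ Finset.range (Fintype.card κ + 1),
          (Nat.choose (Fintype.card κ) x : ℝ≥0∞) * F x := by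
  classical
  let e : (κ → Bool) ≃ Finset κ :=
    { toFun := fun v => Finset.univ.filter fun j => v j = true
      invFun := fun s j => decide (j ∈ s)
      left_inv := by
        intro v; funext j
        by_cases h : v j = true <;> simp [h]
      right_inv := by
        intro s; ext j; simp }
  rw [Fintype.sum_equiv e (fun v => F (cnt v)) (fun s => F s.card) (fun v => rfl)]
  rw [← Finset.powerset_univ, Finset.powerset_card_disjiUnion]
  erw [Finset.sum_disjiUnion]
  refine Finset.sum_congr (by rw [Finset.card_univ]) fun x hx => ?_
  rw [Finset.sum_congr rfl (fun s hs => by rw [(Finset.mem_powersetCard.1 hs).2] :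
      ∀ s ∈ Finset.powersetCard x Finset.univ, F s.card = F x),
    Finset.sum_const, Finset.card_powersetCard, Finset.card_univ, nsmul_eq_mul]

lemma range_split (c : ℕ) (hc : 2 ≤ c) (g : ℕ → ℝ≥0∞) :
    ∑ x ∈ Finset.range (c+1), g x = g 0 + g c + ∑ x ∈ Finset.Ioo 0 c, g x := by
  have h : Finset.range (c+1) = insert 0 (insert c (Finset.Ioo 0 c)) := by
    ext x; simp only [Finset.mem_range, Finset.mem_insert, Finset.mem_Ioo]; omega
  rw [h, Finset.sum_insert (by simp only [Finset.mem_insert, Finset.mem_Ioo]; omega),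
    Finset.sum_insert (by simp only [Finset.mem_Ioo]; omega)]
  ring

lemma lint_E0 (t : ℝ) (ht : t ∈ Set.Ioo (0:ℝ) (1/2)) (f : ℝ → ℝ) (hf_meas : Measurable f)
    (hf_nonneg : ∀ p, 0 ≤ f p) (hf_supp : ∀ p, p ∉ Set.Icc t (1-t) → f p = 0)
    (hf_int : Integrable f) (c x : ℕ) :
    ∫⁻ q, ENNReal.ofReal (q ^ x * (1-q) ^ (c-x)) ∂(biasMeasure f)
      = ENNReal.ofReal (E₀ t f c x) := by
  have hb : ∀ q ∈ Set.Icc t (1-t), (0:ℝ) ≤ q ∧ q ≤ 1 ∧ 0 ≤ 1 - q ∧ 1 - q ≤ 1 := by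
    rintro q ⟨h1, h2⟩
    exact ⟨by linarith [ht.1], by linarith [ht.1], by linarith [ht.1], by linarith [ht.1]⟩
  rw [bias_lintegral t f hf_meas hf_nonneg hf_supp hf_int (fun q => q ^ x * (1-q) ^ (c-x))
    ((measurable_id'.pow_const x).mul ((measurable_const.sub measurable_id').pow_const (c-x)))
    (fun q hq => mul_nonneg (pow_nonneg (hb q hq).1 _) (pow_nonneg (hb q hq).2.2.1 _))
    1 (fun q hq => mul_le_one₀ (pow_le_one₀ (hb q hq).1 (hb q hq).2.1)
      (pow_nonneg (hb q hq).2.2.1 _) (pow_le_one₀ (hb q hq).2.2.1 (hb q hq).2.2.2))]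
  unfold E₀
  congr 1
  refine setIntegral_congr_fun measurableSet_Icc fun q _ => ?_
  ring

lemma lint_E1 (t : ℝ) (ht : t ∈ Set.Ioo (0:ℝ) (1/2)) (f : ℝ → ℝ) (hf_meas : Measurable f)
    (hf_nonneg : ∀ p, 0 ≤ f p) (hf_supp : ∀ p, p ∉ Set.Icc t (1-t) → f p = 0)
    (hf_int : Integrable f) (g1 : ℝ → ℝ) (hg1_meas : Measurable g1)
    (hg1_pos : ∀ p ∈ Set.Ioo (0:ℝ) 1, 0 < g1 p)
    (hg1_anti : AntitoneOn g1 (Set.Ioo (0:ℝ) 1))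
    (α : ℝ) (hα : 0 < α) (c x : ℕ) :
    ∫⁻ q, ENNReal.ofReal (q ^ x * (1-q) ^ (c-x)
        * Real.exp (α * g1 q * ((c:ℝ) * q - (x:ℝ)) / (1-q))) ∂(biasMeasure f)
      = ENNReal.ofReal (E₁ t f g1 α c x) := by
  have htI : t ∈ Set.Ioo (0:ℝ) 1 := ⟨ht.1, by linarith [ht.2]⟩
  have hmem : ∀ q ∈ Set.Icc t (1-t), q ∈ Set.Ioo (0:ℝ) 1 := by
    rintro q ⟨h1, h2⟩
    exact ⟨by linarith [ht.1], by linarith [ht.1]⟩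
  have hb : ∀ q ∈ Set.Icc t (1-t), (0:ℝ) ≤ q ∧ q ≤ 1 ∧ 0 ≤ 1 - q ∧ 1 - q ≤ 1 := by
    rintro q ⟨h1, h2⟩
    exact ⟨by linarith [ht.1], by linarith [ht.1], by linarith [ht.1], by linarith [ht.1]⟩
  have hGmeas : Measurable fun q : ℝ =>
      q ^ x * (1-q) ^ (c-x) * Real.exp (α * g1 q * ((c:ℝ) * q - (x:ℝ)) / (1-q)) := by
    refine ((measurable_id'.pow_const x).mul
      ((measurable_const.sub measurable_id').pow_const (c-x))).mul ?_
    exact Real.measurable_exp.comp (((( measurable_const.mul hg1_meas).mul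
      ((measurable_const.mul measurable_id').sub measurable_const)).div
      (measurable_const.sub measurable_id')))
  have hMb : ∀ q ∈ Set.Icc t (1-t),
      q ^ x * (1-q) ^ (c-x) * Real.exp (α * g1 q * ((c:ℝ) * q - (x:ℝ)) / (1-q))
        ≤ Real.exp (α * g1 t * ((c:ℝ) / t)) := by
    intro q hq
    obtain ⟨hq0, hq1, h1q0, h1q1⟩ := hb q hq
    have hqI := hmem q hq
    have hg1q : 0 ≤ g1 q := (hg1_pos q hqI).le
    have hg1tq : g1 q ≤ g1 t := hg1_anti htI hqI hq.1
    have harg : α * g1 q * ((c:ℝ) * q - (x:ℝ)) / (1-q) ≤ α * g1 t * ((c:ℝ) / t) := by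
      have ht0 : (0:ℝ) < t := ht.1
      have h1qt : t ≤ 1 - q := by linarith [hq.2]
      have hnum : (c:ℝ) * q - (x:ℝ) ≤ (c:ℝ) := by
        have : (c:ℝ) * q ≤ (c:ℝ) := by nlinarith [Nat.cast_nonneg (α := ℝ) c]
        have hx0 : (0:ℝ) ≤ (x:ℝ) := Nat.cast_nonneg x
        linarith
      have hdiv : ((c:ℝ) * q - (x:ℝ)) / (1-q) ≤ (c:ℝ) / t :=
        div_le_div₀ (Nat.cast_nonneg c) hnum ht0 h1qt
      calc α * g1 q * ((c:ℝ) * q - (x:ℝ)) / (1-q)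
          = α * (g1 q * (((c:ℝ) * q - (x:ℝ)) / (1-q))) := by ring
        _ ≤ α * (g1 t * ((c:ℝ) / t)) := by
            refine mul_le_mul_of_nonneg_left ?_ hα.le
            calc g1 q * (((c:ℝ) * q - (x:ℝ)) / (1-q)) ≤ g1 q * ((c:ℝ) / t) :=
                mul_le_mul_of_nonneg_left hdiv hg1q
              _ ≤ g1 t * ((c:ℝ) / t) := mul_le_mul_of_nonneg_right hg1tq
                  (div_nonneg (Nat.cast_nonneg c) ht.1.le)
        _ = α * g1 t * ((c:ℝ) / t) := by ring
    calc q ^ x * (1-q) ^ (c-x) * Real.exp (α * g1 q * ((c:ℝ) * q - (x:ℝ)) / (1-q))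
        ≤ 1 * Real.exp (α * g1 q * ((c:ℝ) * q - (x:ℝ)) / (1-q)) := by
          refine mul_le_mul_of_nonneg_right ?_ (Real.exp_nonneg _)
          exact mul_le_one₀ (pow_le_one₀ hq0 hq1) (pow_nonneg h1q0 _) (pow_le_one₀ h1q0 h1q1)
      _ ≤ Real.exp (α * g1 t * ((c:ℝ) / t)) := by
          rw [one_mul]; exact Real.exp_le_exp.2 harg
  rw [bias_lintegral t f hf_meas hf_nonneg hf_supp hf_int _ hGmeas
    (fun q hq => mul_nonneg (mul_nonneg (pow_nonneg (hb q hq).1 _)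
      (pow_nonneg (hb q hq).2.2.1 _)) (Real.exp_nonneg _))
    _ hMb]
  unfold E₁
  congr 1
  refine setIntegral_congr_fun measurableSet_Icc fun q _ => ?_
  ring

lemma measurable_bif {δ : Type*} [MeasurableSpace δ] {b : δ → Bool} (hb : Measurable b)
    {u v : δ → ℝ} (hu : Measurable u) (hv : Measurable v) :
    Measurable fun z => if b z = true then u z else v z :=
  Measurable.ite (hb (measurableSet_singleton true)) hu hv


def gcolD (g1 g0 : ℝ → ℝ) {κ : Type*} [Fintype κ] (b : Bool) (v : κ → Bool) (q : ℝ) : ℝ :=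
  if b = true then ∑ j, (if v j = true then g1 q else g0 q) else 0

lemma gcolD_meas (g1 g0 : ℝ → ℝ) (hg1 : Measurable g1) (hg0 : Measurable g0)
    {κ : Type*} [Fintype κ] (b : Bool) (v : κ → Bool) :
    Measurable (gcolD g1 g0 b v) := by
  cases b
  · exact measurable_const
  · show Measurable fun q => ∑ j, (if v j = true then g1 q else g0 q)
    exact Finset.measurable_sum _ fun j _ =>
      measurable_bif measurable_const hg1 hg0

def aCD (f g1 g0 : ℝ → ℝ) (α : ℝ) {κ : Type*} [Fintype κ] (v : κ → Bool) (b : Bool) : ℝ≥0∞ :=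
  ∫⁻ q, (∏ j, θ q (v j)) * ENNReal.ofReal (Real.exp (-α * gcolD g1 g0 b v q)) ∂(biasMeasure f)

lemma prod_theta_ofReal {κ : Type*} [Fintype κ] {c : ℕ} (hcard : Fintype.card κ = c)
    (q : ℝ) (hq0 : 0 ≤ q) (h1q : 0 ≤ 1 - q) (v : κ → Bool) :
    ∏ j, θ q (v j) = ENNReal.ofReal (q ^ cnt v * (1-q) ^ (c - cnt v)) := by
  rw [prod_theta_count, hcard, ENNReal.ofReal_mul (pow_nonneg hq0 _),
    ENNReal.ofReal_pow hq0, ENNReal.ofReal_pow h1q]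

lemma aCD_false (t : ℝ) (ht : t ∈ Set.Ioo (0:ℝ) (1/2)) (f : ℝ → ℝ) (hf_meas : Measurable f)
    (hf_nonneg : ∀ p, 0 ≤ f p) (hf_supp : ∀ p, p ∉ Set.Icc t (1-t) → f p = 0)
    (hf_int : Integrable f) (g1 g0 : ℝ → ℝ) (α : ℝ)
    {κ : Type*} [Fintype κ] {c : ℕ} (hcard : Fintype.card κ = c) (v : κ → Bool) :
    aCD f g1 g0 α v false = ENNReal.ofReal (E₀ t f c (cnt v)) := by
  unfold aCD
  have hcong : ∀ᵐ q ∂(biasMeasure f),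
      (∏ j, θ q (v j)) * ENNReal.ofReal (Real.exp (-α * gcolD g1 g0 false v q))
        = ENNReal.ofReal (q ^ cnt v * (1-q) ^ (c - cnt v)) := by
    refine (ae_mem_bias t f hf_supp).mono fun q hq => ?_
    have hq0 : (0:ℝ) ≤ q := by have := hq.1; have := ht.1; linarith
    have h1q : (0:ℝ) ≤ 1 - q := by have := hq.2; have := ht.1; linarith
    have : gcolD g1 g0 false v q = 0 := rfl
    rw [this, mul_zero, Real.exp_zero, ENNReal.ofReal_one, mul_one,
      prod_theta_ofReal hcard q hq0 h1q]
  rw [lintegral_congr_ae hcong, lint_E0 t ht f hf_meas hf_nonneg hf_supp hf_int c (cnt v)]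

lemma aCD_true (t : ℝ) (ht : t ∈ Set.Ioo (0:ℝ) (1/2)) (f : ℝ → ℝ) (hf_meas : Measurable f)
    (hf_nonneg : ∀ p, 0 ≤ f p) (hf_supp : ∀ p, p ∉ Set.Icc t (1-t) → f p = 0)
    (hf_int : Integrable f) (g1 : ℝ → ℝ) (hg1_meas : Measurable g1)
    (hg1_pos : ∀ p ∈ Set.Ioo (0:ℝ) 1, 0 < g1 p)
    (hg1_anti : AntitoneOn g1 (Set.Ioo (0:ℝ) 1))
    (g0 : ℝ → ℝ) (hg0 : ∀ p, g0 p = - p * g1 p / (1 - p))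
    (α : ℝ) (hα : 0 < α)
    {κ : Type*} [Fintype κ] {c : ℕ} (hcard : Fintype.card κ = c) (v : κ → Bool) :
    aCD f g1 g0 α v true = ENNReal.ofReal (E₁ t f g1 α c (cnt v)) := by
  unfold aCD
  have hxle : cnt v ≤ c := hcard ▸ cnt_le v
  have hcong : ∀ᵐ q ∂(biasMeasure f),
      (∏ j, θ q (v j)) * ENNReal.ofReal (Real.exp (-α * gcolD g1 g0 true v q))
        = ENNReal.ofReal (q ^ cnt v * (1-q) ^ (c - cnt v)
            * Real.exp (α * g1 q * ((c:ℝ) * q - (cnt v : ℝ)) / (1-q))) := by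
    refine (ae_mem_bias t f hf_supp).mono fun q hq => ?_
    have hq0 : (0:ℝ) ≤ q := by have := hq.1; have := ht.1; linarith
    have h1q : (0:ℝ) < 1 - q := by have := hq.2; have := ht.1; linarith
    have hexp : -α * gcolD g1 g0 true v q
        = α * g1 q * ((c:ℝ) * q - (cnt v : ℝ)) / (1-q) := by
      have h1 : gcolD g1 g0 true v q
          = (cnt v : ℝ) * g1 q + ((Fintype.card κ - cnt v : ℕ) : ℝ) * g0 q := by
        simp only [gcolD, if_pos rfl]
        exact sum_bool_count v (g1 q) (g0 q)
      rw [h1, hcard, Nat.cast_sub hxle, hg0 q]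
      field_simp
      ring
    rw [hexp, prod_theta_ofReal hcard q hq0 h1q.le,
      ← ENNReal.ofReal_mul (mul_nonneg (pow_nonneg hq0 _) (pow_nonneg h1q.le _))]
  rw [lintegral_congr_ae hcong,
    lint_E1 t ht f hf_meas hf_nonneg hf_supp hf_int g1 hg1_meas hg1_pos hg1_anti α hα c (cnt v)]

def FD (t : ℝ) (f g1 : ℝ → ℝ) (α : ℝ) (c : ℕ) (x : ℕ) : ℝ≥0∞ :=
  if x = 0 then ENNReal.ofReal (E₀ t f c 0)
  else if x = c then ENNReal.ofReal (E₁ t f g1 α c c)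
  else max (ENNReal.ofReal (E₀ t f c x)) (ENNReal.ofReal (E₁ t f g1 α c x))

lemma FD_sum {κ : Type*} [Fintype κ] [DecidableEq κ] (t : ℝ) (f g1 : ℝ → ℝ) (α : ℝ)
    {c : ℕ} (hc : 2 ≤ c) (hcard : Fintype.card κ = c)
    (hE0nn : ∀ x, 0 ≤ E₀ t f c x) (hE1nn : ∀ x, 0 ≤ E₁ t f g1 α c x) :
    ∑ v : κ → Bool, FD t f g1 α c (cnt v)
      = ENNReal.ofReal (E₀ t f c 0 + E₁ t f g1 α c c
          + ∑ x ∈ Finset.Ioo 0 c, (c.choose x : ℝ) * max (E₀ t f c x) (E₁ t f g1 α c x)) := by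
  rw [sum_count (FD t f g1 α c), hcard, range_split c hc]
  have h0 : ((c.choose 0 : ℕ) : ℝ≥0∞) * FD t f g1 α c 0 = ENNReal.ofReal (E₀ t f c 0) := by
    simp [FD]
  have hcterm : ((c.choose c : ℕ) : ℝ≥0∞) * FD t f g1 α c c
      = ENNReal.ofReal (E₁ t f g1 α c c) := by
    have hc0 : c ≠ 0 := by omega
    simp [FD, hc0, Nat.choose_self]
  have hmid : ∑ x ∈ Finset.Ioo 0 c, ((c.choose x : ℕ) : ℝ≥0∞) * FD t f g1 α c x
      = ENNReal.ofReal (∑ x ∈ Finset.Ioo 0 c,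
          (c.choose x : ℝ) * max (E₀ t f c x) (E₁ t f g1 α c x)) := by
    rw [ENNReal.ofReal_sum_of_nonneg (fun x _ => mul_nonneg (Nat.cast_nonneg _)
      ((hE0nn x).trans (le_max_left _ _)))]
    refine Finset.sum_congr rfl fun x hx => ?_
    obtain ⟨hx0, hxc⟩ := Finset.mem_Ioo.1 hx
    rw [FD, if_neg (by omega), if_neg (by omega),
      ENNReal.ofReal_mul (Nat.cast_nonneg _), ENNReal.ofReal_natCast]
    congr 1
    exact (Monotone.map_max (f := ENNReal.ofReal)
      (fun a b h => ENNReal.ofReal_le_ofReal h)).symm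
  rw [h0, hcterm, hmid,
    ← ENNReal.ofReal_add (hE0nn 0) (hE1nn c),
    ← ENNReal.ofReal_add (add_nonneg (hE0nn 0) (hE1nn c)) (Finset.sum_nonneg fun x _ =>
      mul_nonneg (Nat.cast_nonneg _) ((hE0nn x).trans (le_max_left _ _)))]

lemma aCD_le_FD (t : ℝ) (ht : t ∈ Set.Ioo (0:ℝ) (1/2)) (f : ℝ → ℝ) (hf_meas : Measurable f)
    (hf_nonneg : ∀ p, 0 ≤ f p) (hf_supp : ∀ p, p ∉ Set.Icc t (1-t) → f p = 0)
    (hf_int : Integrable f) (g1 : ℝ → ℝ) (hg1_meas : Measurable g1)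
    (hg1_pos : ∀ p ∈ Set.Ioo (0:ℝ) 1, 0 < g1 p)
    (hg1_anti : AntitoneOn g1 (Set.Ioo (0:ℝ) 1))
    (g0 : ℝ → ℝ) (hg0 : ∀ p, g0 p = - p * g1 p / (1 - p))
    (α : ℝ) (hα : 0 < α)
    {κ : Type*} [Fintype κ] {c : ℕ} (hc : 2 ≤ c) (hcard : Fintype.card κ = c)
    (v : κ → Bool) (b : Bool)
    (hb0 : (∀ j, v j = false) → b = false)
    (hb1 : (∀ j, v j = true) → b = true) :
    aCD f g1 g0 α v b ≤ FD t f g1 α c (cnt v) := by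
  by_cases h0 : cnt v = 0
  · have hb : b = false := hb0 (cnt_eq_zero.1 h0)
    rw [hb, aCD_false t ht f hf_meas hf_nonneg hf_supp hf_int g1 g0 α hcard v, FD, if_pos h0, h0]
  · by_cases hcc : cnt v = c
    · have hb : b = true := hb1 (cnt_eq_card.1 (by rw [hcard]; exact hcc))
      rw [hb, aCD_true t ht f hf_meas hf_nonneg hf_supp hf_int g1 hg1_meas hg1_pos hg1_anti
        g0 hg0 α hα hcard v, FD, if_neg h0, if_pos hcc, hcc]
    · rw [FD, if_neg h0, if_neg hcc]
      cases b
      · rw [aCD_false t ht f hf_meas hf_nonneg hf_supp hf_int g1 g0 α hcard v]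
        exact le_max_left _ _
      · rw [aCD_true t ht f hf_meas hf_nonneg hf_supp hf_int g1 hg1_meas hg1_pos hg1_anti
          g0 hg0 α hα hcard v]
        exact le_max_right _ _

/-- in the code-generation model, for a coalition `C` of size `c ≥ 2` using
any admissible strategy (a possibly randomized function `ρ` of the coalition rows only,
satisfying the marking condition) and every `α > 0`,
`E[exp (-α S)] ≤ (E_{0,0} + E_{1,c} + Σ_{x=1}^{c-1} C(c,x)·max (E_{0,x}) (E_{1,x}))^m`. -/
theorem coalition_mgf_bound
    (n m : ℕ) (hn : 1 ≤ n) (hm : 1 ≤ m)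
    (t : ℝ) (ht : t ∈ Set.Ioo (0:ℝ) (1/2))
    (f : ℝ → ℝ) (hf_meas : Measurable f) (hf_nonneg : ∀ p, 0 ≤ f p)
    (hf_supp : ∀ p, p ∉ Set.Icc t (1-t) → f p = 0)
    (hf_prob : IsProbabilityMeasure (biasMeasure f))
    (g1 : ℝ → ℝ) (hg1_meas : Measurable g1)
    (hg1_pos : ∀ p ∈ Set.Ioo (0:ℝ) 1, 0 < g1 p)
    (hg1_anti : AntitoneOn g1 (Set.Ioo (0:ℝ) 1))
    (g0 : ℝ → ℝ) (hg0 : ∀ p, g0 p = - p * g1 p / (1 - p))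
    (C : Finset (Fin n)) (hC : 2 ≤ C.card)
    (Ω' : Type*) [MeasurableSpace Ω'] (μ' : Measure Ω') [IsProbabilityMeasure μ']
    (ρ : (Fin n → Fin m → Bool) → Ω' → (Fin m → Bool))
    (hρ_meas : Measurable (fun q : (Fin n → Fin m → Bool) × Ω' => ρ q.1 q.2))
    (hρ_dep : ∀ X X' r, (∀ j ∈ C, X j = X' j) → ρ X r = ρ X' r)
    (hρ_mark1 : ∀ X r i, (∀ j ∈ C, X j i = true) → ρ X r i = true)
    (hρ_mark0 : ∀ X r i, (∀ j ∈ C, X j i = false) → ρ X r i = false)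
    (α : ℝ) (hα : 0 < α) :
    (∫ q, Real.exp (-α * ∑ j ∈ C, accusation m g1 g0 q.1.1 (q.1.2 j) (ρ q.1.2 q.2))
        ∂((codeMeasure n m f).prod μ'))
      ≤ (E₀ t f C.card 0 + E₁ t f g1 α C.card C.card
          + ∑ x ∈ Finset.Ioo 0 C.card,
              (C.card.choose x : ℝ) * max (E₀ t f C.card x) (E₁ t f g1 α C.card x)) ^ m := by
  classical
  haveI := hf_prob
  have ht0 : (0:ℝ) < t := ht.1
  have hcard : Fintype.card {x // x ∈ C} = C.card := Fintype.card_coe C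
  have hqIcc : ∀ q ∈ Set.Icc t (1-t), (0:ℝ) ≤ q ∧ 0 ≤ 1 - q := by
    rintro q ⟨h1, h2⟩; constructor <;> linarith
  have hE0nn : ∀ x, 0 ≤ E₀ t f C.card x := by
    intro x
    refine setIntegral_nonneg measurableSet_Icc fun q hq => ?_
    obtain ⟨h1, h2⟩ := hqIcc q hq
    exact mul_nonneg (mul_nonneg (hf_nonneg q) (pow_nonneg h1 _)) (pow_nonneg h2 _)
  have hE1nn : ∀ x, 0 ≤ E₁ t f g1 α C.card x := by
    intro x
    refine setIntegral_nonneg measurableSet_Icc fun q hq => ?_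
    obtain ⟨h1, h2⟩ := hqIcc q hq
    exact mul_nonneg (mul_nonneg (mul_nonneg (hf_nonneg q) (pow_nonneg h1 _))
      (pow_nonneg h2 _)) (Real.exp_nonneg _)
  set B := E₀ t f C.card 0 + E₁ t f g1 α C.card C.card
      + ∑ x ∈ Finset.Ioo 0 C.card,
          (C.card.choose x : ℝ) * max (E₀ t f C.card x) (E₁ t f g1 α C.card x) with hB_def
  have hBnn : 0 ≤ B :=
    add_nonneg (add_nonneg (hE0nn 0) (hE1nn C.card)) (Finset.sum_nonneg fun x _ =>
      mul_nonneg (Nat.cast_nonneg _) ((hE0nn x).trans (le_max_left _ _)))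
  have hf_int : Integrable f := by
    refine ⟨hf_meas.aestronglyMeasurable, ?_⟩
    rw [hasFiniteIntegral_iff_ofReal (ae_of_all _ hf_nonneg)]
    have h1 : ∫⁻ q, ENNReal.ofReal (f q) ∂volume = 1 := by
      have h := hf_prob.measure_univ
      rw [biasMeasure, withDensity_apply _ MeasurableSet.univ, Measure.restrict_univ] at h
      exact h
    rw [h1]; exact ENNReal.one_lt_top
  have hg0_meas : Measurable g0 := by
    have h : g0 = fun p => -p * g1 p / (1 - p) := funext hg0
    rw [h]
    exact (measurable_id'.neg.mul hg1_meas).div (measurable_const.sub measurable_id')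
  have hae1 : ∀ᵐ q ∂(biasMeasure f), q ∈ Set.Icc t (1-t) := ae_mem_bias t f hf_supp
  have haem : ∀ᵐ p ∂(Measure.pi fun _ : Fin m => biasMeasure f),
      ∀ i, p i ∈ Set.Icc t (1-t) := by
    rw [ae_all_iff]
    intro i
    rw [ae_iff]
    have h : {p : Fin m → ℝ | ¬ p i ∈ Set.Icc t (1-t)}
        = Function.eval i ⁻¹' {q : ℝ | ¬ q ∈ Set.Icc t (1-t)} := rfl
    rw [h]
    exact Measure.pi_eval_preimage_null (μ := fun _ : Fin m => biasMeasure f) (i := i) (ae_iff.1 hae1)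
  have hsub : ∀ q : ℝ, q ∈ Set.Icc t (1-t) → q ∈ Set.Icc (0:ℝ) 1 := by
    rintro q ⟨h1, h2⟩
    constructor <;> [linarith; linarith [ht.2]]
  -- codeMeasure is a probability measure
  haveI : IsProbabilityMeasure (codeMeasure n m f) := by
    constructor
    rw [codeMeasure, Measure.bind_apply MeasurableSet.univ measurable_kernel.aemeasurable]
    have heval : ∀ᵐ p ∂(Measure.pi fun _ : Fin m => biasMeasure f),
        ((Measure.dirac p).prod
          (Measure.pi fun _ : Fin n => Measure.pi fun i : Fin m => bern (p i)))
          Set.univ = 1 := by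
      refine haem.mono fun p hp => ?_
      rw [← Set.univ_prod_univ, Measure.prod_prod]
      have h1 : (Measure.dirac p) Set.univ = 1 := measure_univ
      have h2 : (Measure.pi fun _ : Fin n => Measure.pi fun i : Fin m => bern (p i))
          Set.univ = 1 := by
        rw [Measure.pi_univ]
        refine Finset.prod_eq_one fun j _ => ?_
        rw [Measure.pi_univ]
        refine Finset.prod_eq_one fun i _ => ?_
        have := theta_sum (p i) (hsub _ (hp i))
        simp only [θ, cond_true, cond_false] at this
        simp [bern, this]
      rw [h1, h2, mul_one]
    rw [lintegral_congr_ae heval]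
    simp
  -- measurability of the full integrand
  have hSmeas : Measurable (fun q : ((Fin m → ℝ) × (Fin n → Fin m → Bool)) × Ω' =>
      ∑ j ∈ C, accusation m g1 g0 q.1.1 (q.1.2 j) (ρ q.1.2 q.2)) := by
    refine Finset.measurable_sum _ fun j _ => ?_
    simp only [accusation]
    refine Finset.measurable_sum _ fun i _ => ?_
    have hy : Measurable fun q : ((Fin m → ℝ) × (Fin n → Fin m → Bool)) × Ω' =>
        ρ q.1.2 q.2 i :=
      (measurable_pi_apply i).comp (hρ_meas.comp
        ((measurable_snd.comp measurable_fst).prodMk measurable_snd))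
    have hx : Measurable fun q : ((Fin m → ℝ) × (Fin n → Fin m → Bool)) × Ω' =>
        q.1.2 j i :=
      (measurable_pi_apply i).comp ((measurable_pi_apply j).comp
        (measurable_snd.comp measurable_fst))
    exact measurable_bif hy (measurable_bif hx
      (hg1_meas.comp ((measurable_pi_apply i).comp (measurable_fst.comp measurable_fst)))
      (hg0_meas.comp ((measurable_pi_apply i).comp (measurable_fst.comp measurable_fst))))
      measurable_const
  -- the key bound for fixed randomness r
  have key : ∀ r : Ω',
      ∫⁻ z, ENNReal.ofReal (Real.exp (-α * ∑ j ∈ C,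
          accusation m g1 g0 z.1 (z.2 j) (ρ z.2 r))) ∂(codeMeasure n m f)
        ≤ ENNReal.ofReal B ^ m := by
    intro r
    set ext0 : ({x // x ∈ C} → Fin m → Bool) → Fin n → Fin m → Bool :=
      fun W j i => if h : j ∈ C then W ⟨j, h⟩ i else false with hext
    have hS0 : Measurable (fun z : (Fin m → ℝ) × (Fin n → Fin m → Bool) =>
        ∑ j ∈ C, accusation m g1 g0 z.1 (z.2 j) (ρ z.2 r)) := by
      refine Finset.measurable_sum _ fun j _ => ?_
      simp only [accusation]
      refine Finset.measurable_sum _ fun i _ => ?_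
      have hy : Measurable fun z : (Fin m → ℝ) × (Fin n → Fin m → Bool) => ρ z.2 r i :=
        (measurable_pi_apply i).comp
          ((measurable_of_countable (fun X => ρ X r)).comp measurable_snd)
      have hx : Measurable fun z : (Fin m → ℝ) × (Fin n → Fin m → Bool) => z.2 j i :=
        (measurable_pi_apply i).comp ((measurable_pi_apply j).comp measurable_snd)
      exact measurable_bif hy (measurable_bif hx
        (hg1_meas.comp ((measurable_pi_apply i).comp measurable_fst))
        (hg0_meas.comp ((measurable_pi_apply i).comp measurable_fst))) measurable_const
    have hFmeas : Measurable (fun z : (Fin m → ℝ) × (Fin n → Fin m → Bool) =>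
        ENNReal.ofReal (Real.exp (-α * ∑ j ∈ C,
          accusation m g1 g0 z.1 (z.2 j) (ρ z.2 r)))) :=
      ENNReal.measurable_ofReal.comp (Real.measurable_exp.comp (hS0.const_mul (-α)))
    refine le_trans (le_of_eq (lintegral_codeMeasure f _ hFmeas)) ?_
    have step1 : ∫⁻ p, ∑ X : Fin n → Fin m → Bool,
          (∏ j, ∏ i, θ (p i) (X j i)) * ENNReal.ofReal (Real.exp (-α * ∑ j ∈ C,
            accusation m g1 g0 p (X j) (ρ X r)))
          ∂(Measure.pi fun _ : Fin m => biasMeasure f)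
        = ∫⁻ p, ∑ W : {x // x ∈ C} → Fin m → Bool,
            (∏ j, ∏ i, θ (p i) (W j i)) * ENNReal.ofReal (Real.exp (-α *
              ∑ j : {x // x ∈ C}, accusation m g1 g0 p (W j) (ρ (ext0 W) r)))
            ∂(Measure.pi fun _ : Fin m => biasMeasure f) := by
      refine lintegral_congr_ae (haem.mono fun p hp => ?_)
      refine sum_group C p (fun i => hsub _ (hp i)) _ _ fun X => ?_
      have h1 : ρ X r = ρ (ext0 (fun j => X j.1)) r := by
        refine hρ_dep X _ r fun j hj => ?_
        funext i
        simp only [hext]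
        rw [dif_pos hj]
      have h2 : ∑ j ∈ C, accusation m g1 g0 p (X j) (ρ X r)
          = ∑ j : {x // x ∈ C}, accusation m g1 g0 p (X j.1)
              (ρ (ext0 (fun j => X j.1)) r) := by
        rw [← Finset.sum_coe_sort C (fun j => accusation m g1 g0 p (X j) (ρ X r))]
        refine Finset.sum_congr rfl fun j _ => ?_
        rw [h1]
      rw [h2]
    refine le_trans (le_of_eq step1) ?_
    have step2 : ∫⁻ p, ∑ W : {x // x ∈ C} → Fin m → Bool,
            (∏ j, ∏ i, θ (p i) (W j i)) * ENNReal.ofReal (Real.exp (-α *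
              ∑ j : {x // x ∈ C}, accusation m g1 g0 p (W j) (ρ (ext0 W) r)))
            ∂(Measure.pi fun _ : Fin m => biasMeasure f)
        = ∑ W : {x // x ∈ C} → Fin m → Bool,
            ∏ i, aCD f g1 g0 α (fun j => W j i) (ρ (ext0 W) r i) := by
      rw [lintegral_finset_sum]
      · refine Finset.sum_congr rfl fun W _ => ?_
        have hfact : ∀ p : Fin m → ℝ,
            (∏ j, ∏ i, θ (p i) (W j i)) * ENNReal.ofReal (Real.exp (-α *
              ∑ j : {x // x ∈ C}, accusation m g1 g0 p (W j) (ρ (ext0 W) r)))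
            = ∏ i, ((∏ j : {x // x ∈ C}, θ (p i) (W j i)) *
                ENNReal.ofReal (Real.exp (-α *
                  gcolD g1 g0 (ρ (ext0 W) r i) (fun j => W j i) (p i)))) := by
          intro p
          rw [Finset.prod_mul_distrib]
          congr 1
          · exact Finset.prod_comm
          · rw [← ENNReal.ofReal_prod_of_nonneg (fun i _ => Real.exp_nonneg _),
              ← Real.exp_sum]
            congr 2
            rw [← Finset.mul_sum]
            congr 1
            simp only [accusation]
            rw [Finset.sum_comm]
            refine Finset.sum_congr rfl fun i _ => ?_
            cases hyi : ρ (ext0 W) r i <;> simp [gcolD, hyi]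
        rw [lintegral_congr hfact,
          lintegral_pi_prod (biasMeasure f)
            (fun i q => (∏ j : {x // x ∈ C}, θ q (W j i)) *
                ENNReal.ofReal (Real.exp (-α *
                  gcolD g1 g0 (ρ (ext0 W) r i) (fun j => W j i) q)))
            (fun i => (Finset.measurable_prod _ fun j _ => theta_measurable _).mul
              (ENNReal.measurable_ofReal.comp (Real.measurable_exp.comp
                ((gcolD_meas g1 g0 hg1_meas hg0_meas _ _).const_mul (-α)))))]
        rfl
      · intro W _
        refine Measurable.mul ?_ ?_
        · exact Finset.measurable_prod _ fun j _ => Finset.measurable_prod _ fun i _ =>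
            (theta_measurable _).comp (measurable_pi_apply i)
        · refine ENNReal.measurable_ofReal.comp (Real.measurable_exp.comp
            (Measurable.const_mul ?_ (-α)))
          refine Finset.measurable_sum _ fun j _ => ?_
          simp only [accusation]
          refine Finset.measurable_sum _ fun i _ => ?_
          exact measurable_bif measurable_const (measurable_bif measurable_const
            (hg1_meas.comp (measurable_pi_apply i))
            (hg0_meas.comp (measurable_pi_apply i))) measurable_const
    refine le_trans (le_of_eq step2) ?_
    have step3 : ∑ W : {x // x ∈ C} → Fin m → Bool,
          ∏ i, aCD f g1 g0 α (fun j => W j i) (ρ (ext0 W) r i)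
        ≤ ∑ W : {x // x ∈ C} → Fin m → Bool,
            ∏ i, FD t f g1 α C.card (cnt (fun j => W j i)) := by
      refine Finset.sum_le_sum fun W _ => Finset.prod_le_prod' fun i _ => ?_
      refine aCD_le_FD t ht f hf_meas hf_nonneg hf_supp hf_int g1 hg1_meas hg1_pos
        hg1_anti g0 hg0 α hα hC hcard _ _ ?_ ?_
      · intro hall
        refine hρ_mark0 _ r i fun j hj => ?_
        simp only [hext]
        rw [dif_pos hj]
        exact hall ⟨j, hj⟩
      · intro hall
        refine hρ_mark1 _ r i fun j hj => ?_
        simp only [hext]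
        rw [dif_pos hj]
        exact hall ⟨j, hj⟩
    refine le_trans step3 (le_of_eq ?_)
    rw [sum_columns (fun _ v => FD t f g1 α C.card (cnt v)),
      FD_sum t f g1 α hC hcard hE0nn hE1nn, ← hB_def, Finset.prod_const,
      Finset.card_univ, Fintype.card_fin]
  -- conclusion
  have hmeas_exp : Measurable (fun q : ((Fin m → ℝ) × (Fin n → Fin m → Bool)) × Ω' =>
      Real.exp (-α * ∑ j ∈ C, accusation m g1 g0 q.1.1 (q.1.2 j) (ρ q.1.2 q.2))) :=
    Real.measurable_exp.comp (hSmeas.const_mul (-α))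
  rw [integral_eq_lintegral_of_nonneg_ae (ae_of_all _ fun q => Real.exp_nonneg _)
    hmeas_exp.aestronglyMeasurable]
  refine ENNReal.toReal_le_of_le_ofReal (pow_nonneg hBnn m) ?_
  rw [lintegral_prod_symm _ hmeas_exp.ennreal_ofReal.aemeasurable]
  calc ∫⁻ r, ∫⁻ z, ENNReal.ofReal (Real.exp (-α * ∑ j ∈ C,
          accusation m g1 g0 z.1 (z.2 j) (ρ z.2 r))) ∂(codeMeasure n m f) ∂μ'
      ≤ ∫⁻ _, ENNReal.ofReal B ^ m ∂μ' := lintegral_mono fun r => key r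
    _ = ENNReal.ofReal B ^ m := by rw [lintegral_const, measure_univ, mul_one]
    _ = ENNReal.ofReal (B ^ m) := (ENNReal.ofReal_pow hBnn m).symm

end
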